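/- arXiv:1308.1137 — 2 statements merged into one kernel-verified Lean document; each statement's English description precedes it below -/
import Mathlib

section
/- Let k ≥ 1, let a : ℕ → ℂ be a k-periodic sequence, let x : ℕ → ℂ satisfy x_{n+2} = a_n x_{n+1} + x_n for all n ≥ 0, and let C_k be the monodromy matrix. Suppose there is an invertible 2×2 complex matrix J such that C_k = J · [[−1, 1], [0, −1]] · J⁻¹ (the Jordan form for a double eigenvalue −1). Then for every n ≥ 0: x_{nk} = (−1)ⁿ [ (J_{2,1}(J⁻¹)_{1,1} + (−n J_{2,1} + J_{2,2})(J⁻¹)_{2,1}) x_1 + (J_{2,1}(J⁻¹)_{1,2} + (−n J_{2,1} + J_{2,2})(J⁻¹)_{2,2}) x_0 ], and x_{nk+1} = (−1)ⁿ [ (J_{1,1}(J⁻¹)_{1,1} + (−n J_{1,1} + J_{1,2})(J⁻¹)_{2,1}) x_1 + (J_{1,1}(J⁻¹)_{1,2} + (−n J_{1,1} + J_{1,2})(J⁻¹)_{2,2}) x_0 ]. -/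
/-- The `i`-th Fibonacci matrix. -/
def fibMat (a : ℕ → ℂ) (i : ℕ) : Matrix (Fin 2) (Fin 2) ℂ :=
  !![a i, 1; 1, 0]

/-- The product `C n = A_{n-1} ⋯ A_1 A_0` of Fibonacci matrices. -/
noncomputable def fibProd (a : ℕ → ℂ) : ℕ → Matrix (Fin 2) (Fin 2) ℂ
  | 0 => 1
  | n + 1 => fibMat a n * fibProd a n

lemma fibProd_entries (a : ℕ → ℂ) (x : ℕ → ℂ)
    (hx : ∀ n, x (n + 2) = a n * x (n + 1) + x n) (m : ℕ) :
    x (m + 1) = fibProd a m 0 0 * x 1 + fibProd a m 0 1 * x 0 ∧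
    x m = fibProd a m 1 0 * x 1 + fibProd a m 1 1 * x 0 := by
  induction m with
  | zero => simp [fibProd, Matrix.one_apply]
  | succ m ih =>
    obtain ⟨h1, h2⟩ := ih
    constructor
    · have := hx m
      rw [show m + 2 = m + 1 + 1 from rfl] at this
      rw [this, h1, h2]
      simp [fibProd, fibMat, Matrix.mul_apply, Fin.sum_univ_two]
      ring
    · rw [h1]
      simp [fibProd, fibMat, Matrix.mul_apply, Fin.sum_univ_two]

lemma fibProd_add (a : ℕ → ℂ) (m j : ℕ) :
    fibProd a (m + j) = fibProd (fun i => a (i + m)) j * fibProd a m := by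
  induction j with
  | zero => simp [fibProd]
  | succ j ih =>
    show fibProd a (m + j + 1) = _
    rw [fibProd, ih, fibProd, Matrix.mul_assoc]
    congr 1
    simp [fibMat, Nat.add_comm]

lemma a_shift (k : ℕ) (a : ℕ → ℂ) (ha : ∀ n, a (n + k) = a n) (n i : ℕ) :
    a (i + n * k) = a i := by
  induction n with
  | zero => simp
  | succ n ih =>
    rw [show i + (n + 1) * k = i + n * k + k by ring, ha, ih]

lemma fibProd_pow (k : ℕ) (a : ℕ → ℂ) (ha : ∀ n, a (n + k) = a n) (n : ℕ) :
    fibProd a (n * k) = (fibProd a k) ^ n := by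
  induction n with
  | zero => simp [fibProd]
  | succ n ih =>
    have h : (fun i => a (i + n * k)) = a := funext (a_shift k a ha n)
    rw [show (n + 1) * k = n * k + k by ring, fibProd_add, h, ih, pow_succ']

lemma jordan_pow (n : ℕ) :
    (!![-1, 1; 0, -1] : Matrix (Fin 2) (Fin 2) ℂ) ^ n =
      (-1 : ℂ) ^ n • !![1, -(n : ℂ); 0, 1] := by
  induction n with
  | zero => simp [Matrix.one_fin_two]
  | succ n ih =>
    rw [pow_succ, ih, pow_succ]
    push_cast
    ext i j
    fin_cases i <;> fin_cases j <;>
      simp [Matrix.mul_apply, Fin.sum_univ_two] <;> ring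

theorem binet_formula_jordan_neg_one (k : ℕ) (hk : 1 ≤ k) (a : ℕ → ℂ)
    (ha : ∀ n, a (n + k) = a n) (x : ℕ → ℂ)
    (hx : ∀ n, x (n + 2) = a n * x (n + 1) + x n)
    (J : Matrix (Fin 2) (Fin 2) ℂ) (hJ : IsUnit J.det)
    (hC : fibProd a k = J * !![-1, 1; 0, -1] * J⁻¹) (n : ℕ) :
    x (n * k) =
      (-1 : ℂ) ^ n *
        ((J 1 0 * J⁻¹ 0 0 + (-(n : ℂ) * J 1 0 + J 1 1) * J⁻¹ 1 0) * x 1 +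
         (J 1 0 * J⁻¹ 0 1 + (-(n : ℂ) * J 1 0 + J 1 1) * J⁻¹ 1 1) * x 0) ∧
    x (n * k + 1) =
      (-1 : ℂ) ^ n *
        ((J 0 0 * J⁻¹ 0 0 + (-(n : ℂ) * J 0 0 + J 0 1) * J⁻¹ 1 0) * x 1 +
         (J 0 0 * J⁻¹ 0 1 + (-(n : ℂ) * J 0 0 + J 0 1) * J⁻¹ 1 1) * x 0) := by
  have hpow : fibProd a (n * k) = J * ((-1 : ℂ) ^ n • !![1, -(n : ℂ); 0, 1]) * J⁻¹ := by
    rw [fibProd_pow k a ha, hC, ← jordan_pow]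
    have hJJ : J⁻¹ * J = 1 := Matrix.nonsing_inv_mul J hJ
    induction n with
    | zero => simp [Matrix.mul_nonsing_inv J hJ]
    | succ m ihm =>
      rw [pow_succ, pow_succ, ihm]
      simp only [Matrix.mul_assoc]
      rw [show J⁻¹ * (J * (!![-1, 1; 0, -1] * J⁻¹)) = !![-1, 1; 0, -1] * J⁻¹ by
        rw [← Matrix.mul_assoc, hJJ, Matrix.one_mul]]
  obtain ⟨h1, h2⟩ := fibProd_entries a x hx (n * k)
  constructor
  · rw [h2, hpow]
    simp [Matrix.mul_apply, Fin.sum_univ_two]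
    ring
  · rw [h1, hpow]
    simp [Matrix.mul_apply, Fin.sum_univ_two]
    ring
end

section
/- Let k ≥ 1 be odd, let a : ℕ → ℂ be a k-periodic sequence whose monodromy matrix C_k has trace 0. Then C_k² is the identity matrix, and consequently every solution x : ℕ → ℂ of x_{n+2} = a_n x_{n+1} + x_n is 2k-periodic: x_{n+2k} = x_n for all n ≥ 0. -/
lemma sq_eq_ch (M : Matrix (Fin 2) (Fin 2) ℂ) :
    M ^ 2 = M.trace • M - M.det • (1 : Matrix (Fin 2) (Fin 2) ℂ) := by
  ext i j
  fin_cases i <;> fin_cases j <;>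
    simp [pow_two, Matrix.mul_apply, Matrix.trace_fin_two, Matrix.det_fin_two,
      Fin.sum_univ_two, Matrix.one_apply] <;> ring

lemma det_fibProd (a : ℕ → ℂ) : ∀ n, (fibProd a n).det = (-1) ^ n := by
  intro n
  induction n with
  | zero => simp [fibProd]
  | succ n ih =>
    rw [fibProd, Matrix.det_mul, ih]
    simp [fibMat, Matrix.det_fin_two_of, pow_succ]

lemma fibProd_add_s12 (a : ℕ → ℂ) (k : ℕ) (ha : ∀ n, a (n + k) = a n) :
    ∀ m, fibProd a (m + k) = fibProd a m * fibProd a k := by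
  intro m
  induction m with
  | zero => simp [fibProd]
  | succ m ih =>
    have : m + 1 + k = (m + k) + 1 := by ring
    rw [this, fibProd, ih, fibProd, Matrix.mul_assoc]
    congr 1
    simp [fibMat, ha m]

theorem odd_period_trace_zero (k : ℕ) (hk : 1 ≤ k) (hodd : Odd k)
    (a : ℕ → ℂ) (ha : ∀ n, a (n + k) = a n)
    (htr : (fibProd a k).trace = 0) :
    fibProd a k ^ 2 = 1 ∧
    ∀ x : ℕ → ℂ, (∀ n, x (n + 2) = a n * x (n + 1) + x n) →
      ∀ n, x (n + 2 * k) = x n := by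
  have hdet : (fibProd a k).det = -1 := by
    rw [det_fibProd, Odd.neg_one_pow hodd]
  have hsq : fibProd a k ^ 2 = 1 := by
    rw [sq_eq_ch, htr, hdet]
    simp
  refine ⟨hsq, ?_⟩
  intro x hx
  have h2k : fibProd a (2 * k) = 1 := by
    have : 2 * k = k + k := by ring
    rw [this, fibProd_add_s12 a k ha k, ← pow_two, hsq]
  -- vector lemma
  have hvec : ∀ n, x (n + 1) = (fibProd a n) 0 0 * x 1 + (fibProd a n) 0 1 * x 0 ∧
      x n = (fibProd a n) 1 0 * x 1 + (fibProd a n) 1 1 * x 0 := by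
    intro n
    induction n with
    | zero => simp [fibProd, Matrix.one_apply]
    | succ n ih =>
      obtain ⟨h1, h0⟩ := ih
      constructor
      · rw [hx n, h1, h0]
        simp [fibProd, Matrix.mul_apply, Fin.sum_univ_two, fibMat]
        ring
      · rw [h1]
        simp [fibProd, Matrix.mul_apply, Fin.sum_univ_two, fibMat]
  have base0 : x (2 * k) = x 0 := by
    have := (hvec (2 * k)).2
    rw [h2k] at this
    simpa [Matrix.one_apply] using this
  have base1 : x (1 + 2 * k) = x 1 := by
    have := (hvec (2 * k)).1
    rw [h2k] at this
    simpa [Matrix.one_apply, Nat.add_comm] using this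
  have ha2k : ∀ n, a (n + 2 * k) = a n := by
    intro n
    have : n + 2 * k = (n + k) + k := by ring
    rw [this, ha, ha]
  intro n
  induction n using Nat.strong_induction_on with
  | _ n ih =>
    match n with
    | 0 => simpa using base0
    | 1 => simpa using base1
    | (m + 2) =>
      have e : m + 2 + 2 * k = (m + 2 * k) + 2 := by ring
      rw [e, hx (m + 2 * k), ha2k, hx m]
      have h1 : m + 2 * k + 1 = (m + 1) + 2 * k := by ring
      rw [h1, ih (m + 1) (by omega), ih m (by omega)]
end
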